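/- arXiv:0901.2531 — 4 statements merged into one kernel-verified Lean document; each statement's English description precedes it below -/
import Mathlib

section
/- If a sequence of partitions {π_n} of [0,1] is uniformly distributed, then it is dense, i.e. lim_{n→∞} diam π_n = 0. -/
open MeasureTheory Filter

/-- A partition of `[0,1]` into `k` closed intervals, determined by points
`0 = t 0 < t 1 < ⋯ < t k = 1`. -/
structure UnitIntervalPartition where
  k : ℕ
  k_pos : 0 < k
  t : ℕ → ℝ
  t_zero : t 0 = 0
  t_last : t k = 1
  mono : ∀ i < k, t i < t (i + 1)

namespace UnitIntervalPartition

/-- The length of the `i`-th interval (`0`-indexed). -/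
def length (π : UnitIntervalPartition) (i : ℕ) : ℝ := π.t (i + 1) - π.t i

/-- The diameter of a partition: the maximal length of its intervals. -/
noncomputable def diam (π : UnitIntervalPartition) : ℝ :=
  (Finset.range π.k).sup' (Finset.nonempty_range_iff.mpr π.k_pos.ne') π.length

end UnitIntervalPartition

/-- A sequence of partitions is uniformly distributed if for every continuous `f` on `[0,1]`,
`(1/k(n)) ∑_{i=1}^{k(n)} f(tᵢⁿ) → ∫₀¹ f`. -/
def IsUD (π : ℕ → UnitIntervalPartition) : Prop :=
  ∀ f : ℝ → ℝ, ContinuousOn f (Set.Icc 0 1) →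
    Tendsto (fun n => (∑ i ∈ Finset.range (π n).k, f ((π n).t (i + 1))) / ((π n).k : ℝ))
      atTop (nhds (∫ x in (0:ℝ)..1, f x))

/-- `π'` is a permutation of `π`: it has the same number of intervals, and its list of
interval lengths is a rearrangement of that of `π`. -/
def IsPermutationOf (π' π : UnitIntervalPartition) : Prop :=
  π'.k = π.k ∧ ∃ e : Equiv.Perm (Fin π.k), ∀ i : Fin π.k, π'.length i = π.length (e i)

/-- Strict monotonicity of partition points up to index `k`. -/
lemma UnitIntervalPartition.t_lt (π : UnitIntervalPartition) {a b : ℕ} (hab : a < b) (hb : b ≤ π.k) :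
    π.t a < π.t b := by
  induction b with
  | zero => omega
  | succ b ih =>
    have hb' : b < π.k := hb
    rcases Nat.lt_succ_iff_lt_or_eq.mp hab with h | h
    · exact (ih h hb'.le).trans (π.mono b hb')
    · subst h; exact π.mono a hb'

lemma UnitIntervalPartition.t_le (π : UnitIntervalPartition) {a b : ℕ} (hab : a ≤ b) (hb : b ≤ π.k) :
    π.t a ≤ π.t b := by
  rcases eq_or_lt_of_le hab with rfl | h
  · exact le_refl _
  · exact (π.t_lt h hb).le

/-- A continuous tent function of height `1/N` centered at `(j+1)/N`. -/
noncomputable def bump (N j : ℕ) (x : ℝ) : ℝ := max 0 (1 / N - |x - (j + 1) / N|)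

lemma bump_nonneg (N j : ℕ) (x : ℝ) : 0 ≤ bump N j x := le_max_left _ _

lemma bump_continuous (N j : ℕ) : Continuous (bump N j) := by
  unfold bump; fun_prop

lemma bump_eq_zero (N j : ℕ) {x : ℝ} (hx : 1 / N ≤ |x - (j + 1) / N|) :
    bump N j x = 0 := max_eq_left (by linarith)

lemma bump_integral_pos {N j : ℕ} (hN : 0 < N) (hj : j < N) :
    0 < ∫ x in (0:ℝ)..1, bump N j x := by
  have hNR : (0:ℝ) < N := by exact_mod_cast hN
  set a : ℝ := j / N with ha
  set b : ℝ := (j + 1) / N with hb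
  have ha0 : 0 ≤ a := by positivity
  have hab : a < b := by
    rw [ha, hb, div_lt_div_iff₀ hNR hNR]
    nlinarith
  have hb1 : b ≤ 1 := by
    rw [hb, div_le_one hNR]
    have : (j:ℝ) + 1 ≤ N := by exact_mod_cast hj
    linarith
  have hint : ∀ u v : ℝ, IntervalIntegrable (bump N j) volume u v :=
    fun u v => (bump_continuous N j).intervalIntegrable u v
  have h1 : (∫ x in (0:ℝ)..1, bump N j x) =
      (∫ x in (0:ℝ)..a, bump N j x) + ((∫ x in a..b, bump N j x) +
        (∫ x in b..(1:ℝ), bump N j x)) := by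
    rw [intervalIntegral.integral_add_adjacent_intervals (hint a b) (hint b 1),
      intervalIntegral.integral_add_adjacent_intervals (hint 0 a) (hint a 1)]
  have h2 : 0 ≤ ∫ x in (0:ℝ)..a, bump N j x :=
    intervalIntegral.integral_nonneg ha0 (fun x _ => bump_nonneg N j x)
  have h3 : 0 ≤ ∫ x in b..(1:ℝ), bump N j x :=
    intervalIntegral.integral_nonneg hb1 (fun x _ => bump_nonneg N j x)
  have h4 : 0 < ∫ x in a..b, bump N j x := by
    apply intervalIntegral.intervalIntegral_pos_of_pos_on (hint a b) _ hab
    intro x hx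
    have hx1 : a < x := hx.1
    have hx2 : x < b := hx.2
    have habs : |x - b| < 1 / N := by
      rw [abs_lt]
      constructor
      · have : b - a = 1 / N := by rw [ha, hb]; field_simp; ring
        linarith
      · linarith [one_div_pos.mpr hNR]
    have : 0 < 1 / (N:ℝ) - |x - b| := by linarith
    exact lt_max_of_lt_right this
  linarith

/-- **Proposition 2.1.** Any uniformly distributed sequence of partitions is dense. -/
theorem ud_implies_dense (π : ℕ → UnitIntervalPartition) (h : IsUD π) :
    Tendsto (fun n => (π n).diam) atTop (nhds 0) := by
  by_contra hc
  rw [Metric.tendsto_atTop] at hc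
  push_neg at hc
  obtain ⟨ε, εpos, hfreq⟩ := hc
  -- grid size
  set N : ℕ := ⌈4 / ε⌉₊ with hNdef
  have hNpos : 0 < N := Nat.ceil_pos.mpr (by positivity)
  have hNR : (0:ℝ) < N := by exact_mod_cast hNpos
  have hNge : 4 / ε ≤ N := Nat.le_ceil _
  have h4N : 4 / N ≤ ε := by
    rw [div_le_iff₀ hNR]
    rw [div_le_iff₀ εpos] at hNge
    linarith
  -- the normalized sums for the bump functions
  set S : ℕ → ℕ → ℝ := fun j n =>
    (∑ i ∈ Finset.range (π n).k, bump N j ((π n).t (i + 1))) / ((π n).k : ℝ) with hS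
  -- key claim: whenever diam ≥ ε, some bump's sum vanishes
  have key : ∀ n, ε ≤ dist ((π n).diam) 0 → ∃ j < N, S j n = 0 := by
    intro n hn
    rw [Real.dist_eq, sub_zero] at hn
    -- find a long interval
    obtain ⟨i, hi, hieq⟩ := Finset.exists_mem_eq_sup'
      (Finset.nonempty_range_iff.mpr (π n).k_pos.ne') (π n).length
    rw [Finset.mem_range] at hi
    have hlen : ε ≤ (π n).length i := by
      have h0 : 0 < (π n).length i := by
        have := (π n).mono i hi
        simp only [UnitIntervalPartition.length]; linarith
      have : ε ≤ |(π n).diam| := hn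
      rw [UnitIntervalPartition.diam, hieq] at this
      rwa [abs_of_pos h0] at this
    set A : ℝ := (π n).t i with hA
    set B : ℝ := (π n).t (i + 1) with hB
    have hAB : ε ≤ B - A := hlen
    have hA0 : 0 ≤ A := by
      rw [hA, ← (π n).t_zero]
      exact (π n).t_le (Nat.zero_le i) hi.le
    have hB1 : B ≤ 1 := by
      rw [hB, ← (π n).t_last]
      exact (π n).t_le hi (le_refl _)
    -- choose j
    set j : ℕ := ⌊A * N⌋₊ + 1 with hj
    have hjA : A < j / N := by
      rw [lt_div_iff₀ hNR]
      have := Nat.lt_floor_add_one (A * N)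
      push_cast [hj]
      linarith
    have hjB : ((j:ℝ) + 2) / N < B := by
      rw [div_lt_iff₀ hNR]
      have hfl : (⌊A * N⌋₊ : ℝ) ≤ A * N := Nat.floor_le (by positivity)
      push_cast [hj]
      have h4 : 4 / N ≤ B - A := le_trans h4N hAB
      rw [div_le_iff₀ hNR] at h4
      nlinarith
    have hjN : j < N := by
      have : ((j:ℝ) + 2) / N < 1 := lt_of_lt_of_le hjB hB1
      rw [div_lt_one hNR] at this
      have : (j:ℝ) < N := by linarith
      exact_mod_cast this
    refine ⟨j, hjN, ?_⟩
    have hsum : (∑ m ∈ Finset.range (π n).k, bump N j ((π n).t (m + 1))) = 0 := by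
      apply Finset.sum_eq_zero
      intro m hm
      rw [Finset.mem_range] at hm
      apply bump_eq_zero
      set p : ℝ := (π n).t (m + 1) with hp
      have hcenter : ((j:ℝ) + 1) / N = (j:ℝ)/N + 1/N := by field_simp
      have hcenter2 : ((j:ℝ) + 2) / N = ((j:ℝ)+1)/N + 1/N := by field_simp; ring
      rcases le_or_gt (m + 1) i with hmi | hmi
      · -- p ≤ A < j/N
        have hpA : p ≤ A := (π n).t_le hmi hi.le
        have : p < (j:ℝ)/N := lt_of_le_of_lt hpA hjA
        rw [abs_sub_comm, le_abs]
        left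
        rw [hcenter]; linarith
      · -- p ≥ B > (j+2)/N
        have hBp : B ≤ p := (π n).t_le hmi hm
        have : ((j:ℝ)+2)/N < p := lt_of_lt_of_le hjB hBp
        rw [le_abs]
        left
        rw [hcenter2] at this
        rw [hcenter]
        linarith
    rw [hS]
    simp only [hsum, zero_div]
  -- pigeonhole: some fixed j works frequently
  have hfreq2 : ∀ M : ℕ, ∃ n ≥ M, ∃ j < N, S j n = 0 := by
    intro M
    obtain ⟨n, hn, hd⟩ := hfreq M
    exact ⟨n, hn, key n hd⟩
  have hpig : ∃ j < N, ∃ᶠ n in atTop, S j n = 0 := by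
    by_contra hnp
    push_neg at hnp
    have hev : ∀ j ∈ Finset.range N, ∀ᶠ n in atTop, ¬ (S j n = 0) := by
      intro j hj
      rw [Finset.mem_range] at hj
      have := hnp j hj
      exact this
    rw [← Filter.eventually_all_finset] at hev
    rw [Filter.eventually_atTop] at hev
    obtain ⟨M, hM⟩ := hev
    obtain ⟨n, hn, j, hjN, hSj⟩ := hfreq2 M
    exact hM n hn j (Finset.mem_range.mpr hjN) hSj
  obtain ⟨j, hjN, hjfreq⟩ := hpig
  -- UD gives convergence of S j to a positive integral
  have hUD := h (bump N j) (bump_continuous N j).continuousOn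
  have hIpos := bump_integral_pos hNpos hjN
  have hev : ∀ᶠ n in atTop, (∫ x in (0:ℝ)..1, bump N j x)/2 < S j n := by
    apply hUD.eventually_const_lt
    linarith
  obtain ⟨n, hSn, hlt⟩ := (hjfreq.and_eventually hev).exists
  rw [hSn] at hlt
  linarith
end

section
/- If {π_n} is a dense sequence of partitions of [0,1], then there exists a sequence of partitions {σ_n} with σ_n a permutation of π_n for every n such that {σ_n} is uniformly distributed. -/
open MeasureTheory Filter

namespace UnitIntervalPartition

lemma length_pos (π : UnitIntervalPartition) {i : ℕ} (hi : i < π.k) : 0 < π.length i :=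
  sub_pos.mpr (π.mono i hi)

lemma length_le_diam (π : UnitIntervalPartition) {i : ℕ} (hi : i < π.k) : π.length i ≤ π.diam :=
  Finset.le_sup' _ (Finset.mem_range.mpr hi)

lemma sum_length (π : UnitIntervalPartition) : ∑ i ∈ Finset.range π.k, π.length i = 1 := by
  have h := Finset.sum_range_sub π.t π.k
  simp only [length]
  rw [h, π.t_zero, π.t_last, sub_zero]

lemma inv_k_le_diam (π : UnitIntervalPartition) : 1 / (π.k : ℝ) ≤ π.diam := by
  have hk : (0:ℝ) < π.k := Nat.cast_pos.mpr π.k_pos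
  rw [div_le_iff₀ hk]
  calc (1:ℝ) = ∑ i ∈ Finset.range π.k, π.length i := π.sum_length.symm
    _ ≤ ∑ _i ∈ Finset.range π.k, π.diam :=
        Finset.sum_le_sum fun i hi => π.length_le_diam (Finset.mem_range.mp hi)
    _ = π.diam * π.k := by simp [mul_comm]

lemma diam_pos (π : UnitIntervalPartition) : 0 < π.diam := by
  refine lt_of_lt_of_le ?_ π.inv_k_le_diam
  have : (0:ℝ) < π.k := Nat.cast_pos.mpr π.k_pos
  positivity

lemma t_mono (π : UnitIntervalPartition) : ∀ j ≤ π.k, ∀ i ≤ j, π.t i ≤ π.t j := by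
  intro j
  induction j with
  | zero => intro _ i hi; interval_cases i; rfl
  | succ j ih =>
    intro hj i hi
    rcases Nat.eq_or_lt_of_le hi with rfl | hlt
    · rfl
    · exact le_trans (ih (by omega) i (by omega)) (le_of_lt (π.mono j (by omega)))

lemma t_mem (π : UnitIntervalPartition) {h : ℕ} (hh : h ≤ π.k) : π.t h ∈ Set.Icc (0:ℝ) 1 := by
  constructor
  · rw [← π.t_zero]; exact π.t_mono h hh 0 (Nat.zero_le h)
  · rw [← π.t_last]; exact π.t_mono π.k le_rfl h hh

end UnitIntervalPartition

lemma list_le_sum {α} (v : α → ℝ) (c : ℝ) :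
    ∀ L : List α, (∀ x ∈ L, c ≤ v x) → L.length * c ≤ (L.map v).sum := by
  intro L
  induction L with
  | nil => simp
  | cons a L ih =>
    intro h
    have h1 := h a (List.mem_cons_self)
    have h2 := ih fun x hx => h x (List.mem_cons_of_mem a hx)
    simp only [List.map_cons, List.sum_cons, List.length_cons]
    push_cast
    linarith

lemma list_sum_le {α} (v : α → ℝ) (c : ℝ) :
    ∀ L : List α, (∀ x ∈ L, v x ≤ c) → (L.map v).sum ≤ L.length * c := by
  intro L
  induction L with
  | nil => simp
  | cons a L ih =>
    intro h
    have h1 := h a (List.mem_cons_self)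
    have h2 := ih fun x hx => h x (List.mem_cons_of_mem a hx)
    simp only [List.map_cons, List.sum_cons, List.length_cons]
    push_cast
    linarith

lemma greedy {α} [DecidableEq α] (v : α → ℝ) (c d : ℝ) (hc : 0 < c) (hcd : c ≤ d) :
    ∀ (m : ℕ) (L : List α), L.length = m → (∀ x ∈ L, 0 ≤ v x ∧ v x ≤ d) →
    ∀ δ : ℝ, |δ| ≤ d → δ + (L.map v).sum = m * c →
    ∃ L', L.Perm L' ∧ ∀ h ≤ m, |δ + ((L'.take h).map v).sum - h * c| ≤ d := by
  intro m
  induction m with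
  | zero =>
    intro L hlen _ δ hδ _
    refine ⟨L, List.Perm.refl L, ?_⟩
    intro h hh
    interval_cases h
    rw [List.length_eq_zero_iff] at hlen
    simp [hlen, hδ]
  | succ m ih =>
    intro L hlen hmem δ hδ hsum
    have hLne : L ≠ [] := by
      intro h; rw [h] at hlen; simp at hlen
    obtain ⟨x, hxL, hδ'⟩ : ∃ x ∈ L, |δ + v x - c| ≤ d := by
      obtain ⟨hδ1, hδ2⟩ := abs_le.mp hδ
      rcases le_or_gt 0 δ with h0 | h0
      · -- all > c would make the sum too big
        by_contra hcon
        push_neg at hcon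
        obtain ⟨y, rest, rfl⟩ := List.exists_cons_of_ne_nil hLne
        have hrest : (rest.map v).sum ≥ rest.length * c := by
          apply list_le_sum
          intro z hz
          have h1 := hcon z (List.mem_cons_of_mem y hz)
          rw [lt_abs] at h1
          obtain ⟨hz0, hzd⟩ := hmem z (List.mem_cons_of_mem y hz)
          rcases h1 with h' | h' <;> linarith
        have hy : c < v y := by
          have h1 := hcon y (List.mem_cons_self)
          rw [lt_abs] at h1
          obtain ⟨hz0, hzd⟩ := hmem y (List.mem_cons_self)
          rcases h1 with h' | h' <;> linarith
        have hlr : rest.length = m := by simpa using hlen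
        rw [hlr] at hrest
        simp only [List.map_cons, List.sum_cons] at hsum
        push_cast at hsum
        linarith
      · -- all < c would make the sum too small
        by_contra hcon
        push_neg at hcon
        have hall : ∀ z ∈ L, v z ≤ c := by
          intro z hz
          have h1 := hcon z hz
          rw [lt_abs] at h1
          obtain ⟨hz0, hzd⟩ := hmem z hz
          rcases h1 with h' | h' <;> linarith
        have hle := list_sum_le v c L hall
        rw [hlen] at hle
        push_cast at hle hsum
        linarith
    -- recurse on L.erase x
    set L₁ := L.erase x with hL₁
    have hperm : L.Perm (x :: L₁) := List.perm_cons_erase hxL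
    have hlen₁ : L₁.length = m := by
      rw [hL₁, List.length_erase_of_mem hxL, hlen]
      omega
    have hmem₁ : ∀ z ∈ L₁, 0 ≤ v z ∧ v z ≤ d := fun z hz =>
      hmem z (List.mem_of_mem_erase hz)
    have hsum₁ : (δ + v x - c) + (L₁.map v).sum = m * c := by
      have := (hperm.map v).sum_eq
      simp only [List.map_cons, List.sum_cons] at this
      rw [this] at hsum
      push_cast at hsum ⊢
      linarith
    obtain ⟨L₁', hperm₁, hbound⟩ := ih L₁ hlen₁ hmem₁ (δ + v x - c) hδ' hsum₁
    refine ⟨x :: L₁', hperm.trans (hperm₁.cons x), ?_⟩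
    intro h hh
    match h with
    | 0 => simpa using hδ
    | h' + 1 =>
      have hh' : h' ≤ m := Nat.lt_succ_iff.mp hh
      have key := hbound h' hh'
      have heq : δ + (((x :: L₁').take (h' + 1)).map v).sum - (↑(h' + 1)) * c
          = (δ + v x - c) + ((L₁'.take h').map v).sum - (h' : ℝ) * c := by
        simp only [List.take_succ_cons, List.map_cons, List.sum_cons]
        push_cast
        ring
      rw [heq]
      exact key

lemma exists_good_perm (π : UnitIntervalPartition) :
    ∃ σ : UnitIntervalPartition, IsPermutationOf σ π ∧ σ.k = π.k ∧
      ∀ h ≤ π.k, |σ.t h - h / π.k| ≤ π.diam := by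
  set k := π.k with hk
  have hk0 : (0:ℝ) < k := Nat.cast_pos.mpr π.k_pos
  set d := π.diam with hd
  set c : ℝ := 1 / k with hc
  have hc0 : 0 < c := by positivity
  have hcd : c ≤ d := π.inv_k_le_diam
  set v : Fin k → ℝ := fun i => π.length i with hv
  have hsumv : ((List.finRange k).map v).sum = 1 := by
    rw [← List.ofFn_eq_map, List.sum_ofFn]
    rw [Fin.sum_univ_eq_sum_range]
    exact π.sum_length
  obtain ⟨L', hperm, hbound⟩ := greedy v c d hc0 hcd k (List.finRange k)
    (List.length_finRange (n := k))
    (fun x _ => ⟨le_of_lt (π.length_pos x.isLt), π.length_le_diam x.isLt⟩)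
    0 (by simpa using le_trans hc0.le hcd)
    (by rw [hsumv, hc]; field_simp; norm_num)
  have hlen' : L'.length = k := by rw [← hperm.length_eq, List.length_finRange]
  have hnodup : L'.Nodup := hperm.nodup_iff.mp (List.nodup_finRange k)
  have hsum' : (L'.map v).sum = 1 := by rw [← (hperm.map v).sum_eq, hsumv]
  -- the gap identity
  have hgap : ∀ i (hi : i < k),
      ((L'.take (i+1)).map v).sum
        = ((L'.take i).map v).sum + v (L'.get ⟨i, by rw [hlen']; exact hi⟩) := by
    intro i hi
    rw [List.map_take, List.map_take,
      List.sum_take_succ (L'.map v) i (by rw [List.length_map, hlen']; exact hi)]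
    congr 1
    simp
  refine ⟨⟨k, π.k_pos, fun h => ((L'.take h).map v).sum, by simp, ?_, ?_⟩, ⟨rfl, ?_⟩, rfl, ?_⟩
  · show ((L'.take k).map v).sum = 1
    rw [List.take_of_length_le hlen'.le, hsum']
  · intro i hi
    show ((L'.take i).map v).sum < ((L'.take (i+1)).map v).sum
    rw [hgap i hi]
    have := π.length_pos (L'.get ⟨i, by rw [hlen']; exact hi⟩).isLt
    simp only [hv] at *
    linarith
  · -- the permutation
    have hinj : Function.Injective (fun i : Fin k => L'.get (Fin.cast hlen'.symm i)) := by
      intro a b hab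
      have := List.nodup_iff_injective_get.mp hnodup hab
      exact Fin.cast_injective _ this
    refine ⟨Equiv.ofBijective _ (Finite.injective_iff_bijective.mp hinj), fun i => ?_⟩
    show ((L'.take ((i:ℕ)+1)).map v).sum - ((L'.take (i:ℕ)).map v).sum = π.length _
    rw [hgap i i.isLt, add_sub_cancel_left]
    simp only [hv, Equiv.ofBijective]
    rfl
  · intro h hh
    have := hbound h hh
    rw [zero_add] at this
    show |((L'.take h).map v).sum - h / (k:ℝ)| ≤ d
    rw [div_eq_mul_inv, ← one_div, ← hc]
    exact this

/-- **Theorem 2.2.** If `{π_n}` is a dense sequence of partitions, then there exists a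
sequence of partitions `{σ_n}`, with `σ_n` a permutation of `π_n` for every `n`, which is
uniformly distributed. -/
theorem exists_ud_permutation (π : ℕ → UnitIntervalPartition)
    (hdense : Tendsto (fun n => (π n).diam) atTop (nhds 0)) :
    ∃ σ : ℕ → UnitIntervalPartition, (∀ n, IsPermutationOf (σ n) (π n)) ∧ IsUD σ := by
  choose σ hperm hk hbound using fun n => exists_good_perm (π n)
  refine ⟨σ, hperm, ?_⟩
  intro f hf
  rw [Metric.tendsto_atTop]
  intro ε hε
  obtain ⟨δ, hδ0, hδf⟩ := Metric.uniformContinuousOn_iff.mp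
    (isCompact_Icc.uniformContinuousOn_of_continuous hf) (ε/2) (by linarith)
  obtain ⟨N, hN⟩ := Metric.tendsto_atTop.mp hdense (δ/2) (by linarith)
  refine ⟨N, fun n hn => ?_⟩
  have hdn := hN n hn
  rw [Real.dist_eq, sub_zero, abs_of_pos (π n).diam_pos] at hdn
  set d := (π n).diam with hd
  set k := (σ n).k with hks
  have hkk : k = (π n).k := hk n
  have hk0 : 0 < k := (σ n).k_pos
  have hK : (0:ℝ) < k := Nat.cast_pos.mpr hk0
  have hbnd := hbound n
  rw [← hkk] at hbnd
  have hcd : 1/(k:ℝ) ≤ d := by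
    have := (π n).inv_k_le_diam
    rw [← hkk] at this
    exact this
  set a : ℕ → ℝ := fun h => h / k with ha
  have hmono_a : ∀ i j : ℕ, i ≤ j → a i ≤ a j := by
    intro i j hij
    simp only [ha]
    gcongr
    try exact_mod_cast hij
  have ha01 : ∀ i, i ≤ k → a i ∈ Set.Icc (0:ℝ) 1 := by
    intro i hi
    constructor
    · simp only [ha]; positivity
    · simp only [ha]
      rw [div_le_one hK]
      exact_mod_cast hi
  have ha0 : a 0 = 0 := by simp [ha]
  have hak : a k = 1 := by
    simp only [ha]
    field_simp
  have hgap_a : ∀ i : ℕ, a (i+1) - a i = 1/(k:ℝ) := by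
    intro i
    simp only [ha]
    push_cast
    field_simp
    ring
  have hint : ∀ i < k, IntervalIntegrable f MeasureTheory.volume (a i) (a (i+1)) := by
    intro i hi
    apply ContinuousOn.intervalIntegrable
    apply hf.mono
    rw [Set.uIcc_of_le (hmono_a i (i+1) (Nat.le_succ i))]
    intro x hx
    exact ⟨le_trans (ha01 i (by omega)).1 hx.1, le_trans hx.2 (ha01 (i+1) (by omega)).2⟩
  have hsplit : ∑ i ∈ Finset.range k, ∫ x in a i..a (i+1), f x = ∫ x in (0:ℝ)..1, f x := by
    rw [intervalIntegral.sum_integral_adjacent_intervals hint, ha0, hak]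
  have hterm : ∀ i ∈ Finset.range k,
      |f ((σ n).t (i+1)) / k - ∫ x in a i..a (i+1), f x| ≤ (ε/2) / k := by
    intro i hi'
    have hi : i < k := Finset.mem_range.mp hi'
    set s := (σ n).t (i+1) with hs'
    have hs : s ∈ Set.Icc (0:ℝ) 1 := (σ n).t_mem (by omega)
    have haa : a i ≤ a (i+1) := hmono_a i (i+1) (Nat.le_succ i)
    have key : ∀ x ∈ Set.uIoc (a i) (a (i+1)), ‖f x - f s‖ ≤ ε/2 := by
      intro x hx
      rw [Set.uIoc_of_le haa] at hx
      have hx1 : x ∈ Set.Icc (0:ℝ) 1 :=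
        ⟨le_trans (ha01 i (by omega)).1 hx.1.le, le_trans hx.2 (ha01 (i+1) (by omega)).2⟩
      have h1 : |x - a (i+1)| ≤ 1/(k:ℝ) := by
        rw [abs_le]
        constructor
        · have := hgap_a i
          nlinarith [hx.1.le]
        · have h0k : (0:ℝ) ≤ 1/(k:ℝ) := by positivity
          linarith [hx.2]
      have h2 : |a (i+1) - s| ≤ d := by
        rw [abs_sub_comm]
        exact hbnd (i+1) (by omega)
      have hdist : dist x s < δ := by
        rw [Real.dist_eq]
        calc |x - s| ≤ |x - a (i+1)| + |a (i+1) - s| := abs_sub_le x (a (i+1)) s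
          _ ≤ 1/(k:ℝ) + d := add_le_add h1 h2
          _ ≤ d + d := by linarith
          _ < δ := by linarith
      have := hδf x hx1 s hs hdist
      rw [Real.dist_eq] at this
      exact le_of_lt this
    have hnorm : ‖∫ x in a i..a (i+1), (f x - f s)‖ ≤ (ε/2) * |a (i+1) - a i| :=
      intervalIntegral.norm_integral_le_of_norm_le_const key
    rw [intervalIntegral.integral_sub (hint i hi) intervalIntegrable_const,
      intervalIntegral.integral_const, smul_eq_mul, hgap_a i] at hnorm
    rw [abs_of_nonneg (by positivity : (0:ℝ) ≤ 1/(k:ℝ))] at hnorm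
    have heq : f s / (k:ℝ) - ∫ x in a i..a (i+1), f x
        = -((∫ x in a i..a (i+1), f x) - 1/(k:ℝ) * f s) := by ring
    rw [heq, abs_neg]
    calc |(∫ x in a i..a (i+1), f x) - 1/(k:ℝ) * f s| ≤ ε/2 * (1/(k:ℝ)) := by
          rw [← Real.norm_eq_abs]; exact hnorm
      _ = (ε/2) / k := by ring
  rw [Real.dist_eq, ← hsplit, Finset.sum_div, ← Finset.sum_sub_distrib]
  calc |∑ i ∈ Finset.range k, (f ((σ n).t (i+1)) / k - ∫ x in a i..a (i+1), f x)|
      ≤ ∑ i ∈ Finset.range k, |f ((σ n).t (i+1)) / k - ∫ x in a i..a (i+1), f x| :=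
        Finset.abs_sum_le_sum_abs _ _
    _ ≤ ∑ _i ∈ Finset.range k, (ε/2) / k := Finset.sum_le_sum hterm
    _ = k * ((ε/2)/k) := by rw [Finset.sum_const, Finset.card_range]; ring
    _ = ε/2 := by field_simp
    _ < ε := by linarith
end

section
/- (von Neumann) If {x_n} is a dense sequence of points in [0,1], then there exists a rearrangement {x_{n_k}} of these points (a reindexing by a bijection of ℕ) which is uniformly distributed. -/
open Filter Finset

namespace VN

/-- `T m = 1 + 2 + ⋯ + m`, start index of block `m` (block `m` has length `m+1`). -/
def T (m : ℕ) : ℕ := ∑ k ∈ Finset.range m, (k + 1)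

lemma T_succ (m : ℕ) : T (m + 1) = T m + (m + 1) := Finset.sum_range_succ _ _

lemma two_T (m : ℕ) : 2 * T m = m * (m + 1) := by
  induction m with
  | zero => simp [T]
  | succ m ih => rw [T_succ, Nat.mul_add, ih]; ring

lemma T_mono : Monotone T := by
  apply monotone_nat_of_le_succ
  intro m; rw [T_succ]; omega

lemma le_T (m : ℕ) : m ≤ T m := by
  induction m with
  | zero => simp [T]
  | succ m ih => rw [T_succ]; omega

/-- block/position decomposition of an index. -/
def bp : ℕ → ℕ × ℕ
  | 0 => (0, 0)
  | i + 1 => if (bp i).2 + 1 ≤ (bp i).1 then ((bp i).1, (bp i).2 + 1) else ((bp i).1 + 1, 0)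

lemma bp_le (i : ℕ) : (bp i).2 ≤ (bp i).1 := by
  induction i with
  | zero => simp [bp]
  | succ i ih =>
    rw [bp]
    split
    · simp; omega
    · simp

lemma bp_spec (i : ℕ) : i = T (bp i).1 + (bp i).2 := by
  induction i with
  | zero => simp [bp, T]
  | succ i ih =>
    rw [bp]
    split
    · simp only []
      omega
    · rename_i h
      have he : (bp i).2 = (bp i).1 := le_antisymm (bp_le i) (by omega)
      simp only [T_succ]
      omega

lemma bp_unique {k j k' j' : ℕ} (hj : j ≤ k) (hj' : j' ≤ k') (h : T k + j = T k' + j') :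
    k = k' ∧ j = j' := by
  rcases Nat.lt_trichotomy k k' with hlt | heq | hgt
  · have h1 : T (k+1) ≤ T k' := T_mono hlt
    rw [T_succ] at h1; omega
  · constructor; exact heq; subst heq; omega
  · have h1 : T (k'+1) ≤ T k := T_mono hgt
    rw [T_succ] at h1; omega

lemma bp_eq {k j : ℕ} (hj : j ≤ k) : bp (T k + j) = (k, j) := by
  have h1 := bp_spec (T k + j)
  have h2 := bp_le (T k + j)
  obtain ⟨hk, hj2⟩ := bp_unique h2 hj h1.symm
  exact Prod.ext hk hj2

lemma bp_fst_ge {K n : ℕ} (h : T K ≤ n) : K ≤ (bp n).1 := by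
  by_contra hc
  push_neg at hc
  have h1 : T ((bp n).1 + 1) ≤ T K := T_mono (by omega)
  have h2 := bp_spec n
  have h3 := bp_le n
  rw [T_succ] at h1
  omega

/-- perfect square test -/
def issq (k : ℕ) : Prop := Nat.sqrt k * Nat.sqrt k = k

instance : DecidablePred issq := fun k => by unfold issq; infer_instance

lemma issq_sq (j : ℕ) : issq (j * j) := by unfold issq; rw [Nat.sqrt_eq]

lemma card_sq (n : ℕ) : ((Finset.range n).filter issq).card ≤ Nat.sqrt n + 1 := by
  have : ((Finset.range n).filter issq).card ≤ (Finset.range (Nat.sqrt n + 1)).card := by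
    apply Finset.card_le_card_of_injOn (fun i => Nat.sqrt i)
    · intro i hi
      simp only [Finset.mem_coe, Finset.mem_filter, Finset.mem_range] at hi ⊢
      have := Nat.sqrt_le_sqrt (Nat.le_of_lt hi.1)
      omega
    · intro i hi i' hi' hii
      simp only [Finset.mem_filter, Finset.mem_range, Finset.coe_filter] at hi hi'
      have h1 : Nat.sqrt i * Nat.sqrt i = i := hi.2
      have h2 : Nat.sqrt i' * Nat.sqrt i' = i' := hi'.2
      simp only at hii
      rw [← h1, ← h2, hii]
  simpa using this

lemma sum_range_add' {M : Type*} [AddCommMonoid M] (h : ℕ → M) (a b : ℕ) :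
    ∑ i ∈ Finset.range (a + b), h i
      = (∑ i ∈ Finset.range a, h i) + ∑ j ∈ Finset.range b, h (a + j) := by
  induction b with
  | zero => simp
  | succ b ih =>
    rw [← Nat.add_assoc, Finset.sum_range_succ, ih, Finset.sum_range_succ]
    rw [add_assoc]

lemma sum_range_T {M : Type*} [AddCommMonoid M] (h : ℕ → M) (m : ℕ) :
    ∑ i ∈ Finset.range (T m), h i
      = ∑ k ∈ Finset.range m, ∑ j ∈ Finset.range (k + 1), h (T k + j) := by
  induction m with
  | zero => simp [T]
  | succ m ih =>
    rw [T_succ, sum_range_add', ih, Finset.sum_range_succ (fun k => ∑ j ∈ Finset.range (k + 1), h (T k + j)), Finset.sum_range_succ (fun j => h (T m + j))]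


variable (x : ℕ → ℝ)

/-- left endpoint of target interval for step `i` -/
noncomputable def lo (i : ℕ) : ℝ := ((bp i).2 : ℝ) / ((bp i).1 + 1)
/-- right endpoint -/
noncomputable def hi (i : ℕ) : ℝ := (((bp i).2 : ℝ) + 1) / ((bp i).1 + 1)
/-- midpoint -/
noncomputable def mid (i : ℕ) : ℝ := (2 * ((bp i).2 : ℝ) + 1) / (2 * ((bp i).1 + 1))

lemma lo_nonneg (i : ℕ) : 0 ≤ lo i := by
  unfold lo; positivity

lemma lo_lt_hi (i : ℕ) : lo i < hi i := by
  unfold lo hi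
  rw [div_lt_div_iff_of_pos_right (by positivity)]
  linarith

lemma hi_le_one (i : ℕ) : hi i ≤ 1 := by
  unfold hi
  rw [div_le_one (by positivity)]
  have := bp_le i
  exact_mod_cast by exact_mod_cast Nat.add_le_add_right this 1

lemma lo_lt_mid (i : ℕ) : lo i < mid i := by
  unfold lo mid
  rw [div_lt_div_iff₀ (by positivity) (by positivity)]
  ring_nf
  nlinarith [(Nat.cast_nonneg (bp i).2 : (0:ℝ) ≤ _), (Nat.cast_nonneg (bp i).1 : (0:ℝ) ≤ _)]

lemma mid_lt_hi (i : ℕ) : mid i < hi i := by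
  unfold mid hi
  rw [div_lt_div_iff₀ (by positivity) (by positivity)]
  nlinarith [(Nat.cast_nonneg (bp i).2 : (0:ℝ) ≤ _), (Nat.cast_nonneg (bp i).1 : (0:ℝ) ≤ _)]

/-- we can always find an index outside a given finite set landing in any subinterval -/
lemma avoid (hdense : ∀ a b : ℝ, 0 ≤ a → a < b → b ≤ 1 → ∃ n, x n ∈ Set.Ioo a b)
    (S : Finset ℕ) {a b : ℝ} (ha : 0 ≤ a) (hab : a < b) (hb : b ≤ 1) :
    ∃ n, n ∉ S ∧ x n ∈ Set.Ioo a b := by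
  classical
  set P : Finset ℝ := S.image x with hP
  have hne : (Set.Ioo a b \ ↑P).Nonempty :=
    ((Set.Ioo_infinite hab).diff (P.finite_toSet)).nonempty
  obtain ⟨c, hc1, hc2⟩ := hne
  set Q : Finset ℝ := insert a (insert b P) with hQ
  set D : Finset ℝ := Q.image (fun q => |c - q|) with hD
  have hDne : D.Nonempty := ⟨|c - a|, by simp [hD, hQ]⟩
  set δ : ℝ := D.min' hDne with hδ
  have hδpos : 0 < δ := by
    rw [hδ]
    rw [Finset.lt_min'_iff]
    intro y hy
    rw [hD] at hy
    simp only [Finset.mem_image] at hy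
    obtain ⟨q, hq, rfl⟩ := hy
    rw [abs_pos, sub_ne_zero]
    rw [hQ] at hq
    simp only [Finset.mem_insert] at hq
    rcases hq with rfl | rfl | hq
    · exact ne_of_gt hc1.1
    · exact ne_of_lt hc1.2
    · intro hcq; exact hc2 (by rw [hcq]; exact hq)
  have hδle : ∀ q ∈ Q, δ ≤ |c - q| := by
    intro q hq
    exact Finset.min'_le _ _ (by rw [hD]; exact Finset.mem_image_of_mem _ hq)
  have hca : δ ≤ c - a := by
    have := hδle a (by simp [hQ])
    rwa [abs_of_pos (by linarith [hc1.1])] at this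
  have hcb : δ ≤ b - c := by
    have := hδle b (by simp [hQ])
    rwa [abs_of_neg (by linarith [hc1.2]), neg_sub] at this
  obtain ⟨n, hn⟩ := hdense (c - δ) (c + δ) (by linarith) (by linarith) (by linarith)
  refine ⟨n, ?_, ?_⟩
  · intro hnS
    have hxn : x n ∈ P := by rw [hP]; exact Finset.mem_image_of_mem _ hnS
    have h1 := hδle (x n) (by simp [hQ, hxn])
    have h2 : |c - x n| < δ := by
      rw [abs_sub_lt_iff]
      constructor <;> [linarith [hn.1]; linarith [hn.2]]
    linarith
  · exact ⟨by linarith [hn.1], by linarith [hn.2]⟩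

noncomputable def pick (hdense : ∀ a b : ℝ, 0 ≤ a → a < b → b ≤ 1 → ∃ n, x n ∈ Set.Ioo a b)
    (k : ℕ) (S : Finset ℕ) : ℕ :=
  if issq k then Nat.find (Infinite.exists_notMem_finset S)
  else Classical.choose (avoid x hdense S (lo_nonneg k) (lo_lt_hi k) (hi_le_one k))

noncomputable def used (hdense : ∀ a b : ℝ, 0 ≤ a → a < b → b ≤ 1 → ∃ n, x n ∈ Set.Ioo a b) :
    ℕ → Finset ℕ
  | 0 => ∅
  | k + 1 => insert (pick x hdense k (used hdense k)) (used hdense k)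

noncomputable def g (hdense : ∀ a b : ℝ, 0 ≤ a → a < b → b ≤ 1 → ∃ n, x n ∈ Set.Ioo a b)
    (k : ℕ) : ℕ := pick x hdense k (used x hdense k)

variable (hdense : ∀ a b : ℝ, 0 ≤ a → a < b → b ≤ 1 → ∃ n, x n ∈ Set.Ioo a b)

lemma used_succ (k : ℕ) : used x hdense (k + 1) = insert (g x hdense k) (used x hdense k) := rfl

lemma g_not_mem (k : ℕ) : g x hdense k ∉ used x hdense k := by
  unfold g pick
  split
  · exact Nat.find_spec (Infinite.exists_notMem_finset _)
  · exact (Classical.choose_spec (avoid x hdense _ (lo_nonneg k) (lo_lt_hi k) (hi_le_one k))).1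

lemma g_mem_Ioo {k : ℕ} (h : ¬ issq k) : x (g x hdense k) ∈ Set.Ioo (lo k) (hi k) := by
  unfold g pick
  rw [if_neg h]
  exact (Classical.choose_spec (avoid x hdense _ (lo_nonneg k) (lo_lt_hi k) (hi_le_one k))).2

lemma g_sq_le {k : ℕ} (h : issq k) {m : ℕ} (hm : m ∉ used x hdense k) : g x hdense k ≤ m := by
  unfold g pick
  rw [if_pos h]
  exact Nat.find_min' _ hm

lemma used_mono : Monotone (used x hdense) := by
  apply monotone_nat_of_le_succ
  intro k
  rw [used_succ]
  exact Finset.subset_insert _ _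

lemma g_mem_used {k k' : ℕ} (h : k < k') : g x hdense k ∈ used x hdense k' := by
  have h1 : g x hdense k ∈ used x hdense (k + 1) := by rw [used_succ]; exact Finset.mem_insert_self _ _
  exact used_mono x hdense h h1

lemma g_inj : Function.Injective (g x hdense) := by
  have key : ∀ k k', k < k' → g x hdense k ≠ g x hdense k' := by
    intro k k' hlt h
    exact g_not_mem x hdense k' (h ▸ g_mem_used x hdense hlt)
  intro k k' h
  rcases Nat.lt_trichotomy k k' with hlt | heq | hgt
  · exact absurd h (key k k' hlt)
  · exact heq
  · exact absurd h.symm (key k' k hgt)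

lemma g_surj : Function.Surjective (g x hdense) := by
  intro m
  by_contra hc
  push_neg at hc
  have hnot : ∀ k, m ∉ used x hdense k := by
    intro k
    induction k with
    | zero => simp [used]
    | succ k ih =>
      rw [used_succ]
      simp only [Finset.mem_insert]
      push_neg
      exact ⟨fun h => hc k h.symm, ih⟩
  have hlt : ∀ j : ℕ, g x hdense (j * j) < m := by
    intro j
    have h1 := g_sq_le x hdense (issq_sq j) (hnot (j * j))
    have h2 := hc (j * j)
    omega
  have : Function.Injective (fun j : Fin (m + 1) => (⟨g x hdense (j.1 * j.1), hlt j.1⟩ : Fin m)) := by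
    intro j j' h
    simp only [Fin.mk.injEq] at h
    have := g_inj x hdense h
    have : j.1 * j.1 = j'.1 * j'.1 := this
    have := Nat.mul_self_inj.mp this
    exact Fin.ext this
  have := Fintype.card_le_of_injective _ this
  simp at this
lemma riemann (f : ℝ → ℝ) (hf : ContinuousOn f (Set.Icc 0 1)) {ε δ : ℝ} (hε : 0 ≤ ε)
    (hδf : ∀ s ∈ Set.Icc (0:ℝ) 1, ∀ t ∈ Set.Icc (0:ℝ) 1, |s - t| ≤ δ → |f s - f t| ≤ ε)
    {m : ℕ} (hm : 1 ≤ m) (hmδ : 1 / (m:ℝ) ≤ δ) (p : ℕ → ℝ)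
    (hp : ∀ j < m, p j ∈ Set.Icc ((j:ℝ)/m) (((j:ℝ)+1)/m)) :
    |(∑ j ∈ Finset.range m, f (p j)) - m * ∫ t in (0:ℝ)..1, f t| ≤ m * ε := by
  have hm0 : (0:ℝ) < m := by exact_mod_cast hm
  set a : ℕ → ℝ := fun j => (j:ℝ) / m with ha
  have hstep : ∀ j : ℕ, a (j+1) = a j + 1/m := by
    intro j; simp only [ha]; push_cast; ring
  have hle : ∀ j : ℕ, a j ≤ a (j+1) := by
    intro j; rw [hstep]; linarith [one_div_pos.mpr hm0]
  have hsub : ∀ j, j < m → Set.uIcc (a j) (a (j+1)) ⊆ Set.Icc (0:ℝ) 1 := by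
    intro j hj
    rw [Set.uIcc_of_le (hle j)]
    apply Set.Icc_subset_Icc
    · simp only [ha]; positivity
    · simp only [ha]
      rw [div_le_one hm0]
      exact_mod_cast hj
  have hint : ∀ j, j < m → IntervalIntegrable f MeasureTheory.volume (a j) (a (j+1)) := by
    intro j hj
    exact (hf.mono (hsub j hj)).intervalIntegrable
  have hsplit : ∑ j ∈ Finset.range m, (∫ t in a j..a (j+1), f t) = ∫ t in (0:ℝ)..1, f t := by
    rw [intervalIntegral.sum_integral_adjacent_intervals hint]
    norm_num [ha, div_self (ne_of_gt hm0)]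
  have key : ∀ j, j < m → |f (p j) - m * ∫ t in a j..a (j+1), f t| ≤ ε := by
    intro j hj
    have hpj := hp j hj
    have hpj01 : p j ∈ Set.Icc (0:ℝ) 1 := by
      refine ⟨le_trans (by positivity : (0:ℝ) ≤ (j:ℝ)/m) hpj.1, le_trans hpj.2 ?_⟩
      rw [div_le_one hm0]; exact_mod_cast hj
    have hconst : ∫ t in a j..a (j+1), (f t - f (p j))
        = (∫ t in a j..a (j+1), f t) - (1/m) * f (p j) := by
      rw [intervalIntegral.integral_sub (hint j hj) intervalIntegrable_const,
        intervalIntegral.integral_const, hstep, smul_eq_mul]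
      ring
    have hbound : ‖∫ t in a j..a (j+1), (f t - f (p j))‖ ≤ ε * |a (j+1) - a j| := by
      apply intervalIntegral.norm_integral_le_of_norm_le_const
      intro t ht
      rw [Set.uIoc_of_le (hle j)] at ht
      have ht' : t ∈ Set.Icc (0:ℝ) 1 := hsub j hj
        (by rw [Set.uIcc_of_le (hle j)]; exact Set.mem_Icc_of_Ioc ht)
      have hdist : |t - p j| ≤ δ := by
        refine le_trans ?_ hmδ
        have h1 := ht.1
        have h2 := ht.2
        have h3 := hpj.1
        have h4 := hpj.2
        rw [hstep] at h2
        have h5 : ((j:ℝ)+1)/m = (j:ℝ)/m + 1/m := by push_cast; ring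
        rw [h5] at h4
        rw [abs_le]
        constructor <;> simp only [ha] at * <;> linarith
      have := hδf t ht' (p j) hpj01 hdist
      simpa [Real.norm_eq_abs] using this
    rw [Real.norm_eq_abs] at hbound
    have habs : |a (j+1) - a j| = 1/m := by
      rw [hstep, add_sub_cancel_left, abs_of_pos (by positivity)]
    rw [habs] at hbound
    have heq : f (p j) - m * ∫ t in a j..a (j+1), f t
        = -(m * ((∫ t in a j..a (j+1), (f t - f (p j)))) ) := by
      rw [hconst, mul_sub]
      rw [show (m:ℝ) * (1/m * f (p j)) = f (p j) by field_simp]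
      ring
    rw [heq, abs_neg, abs_mul, abs_of_pos hm0]
    calc (m:ℝ) * |∫ t in a j..a (j+1), (f t - f (p j))| ≤ m * (ε * (1/m)) := by
          apply mul_le_mul_of_nonneg_left hbound (le_of_lt hm0)
      _ = ε := by field_simp
  have hdecomp : (∑ j ∈ Finset.range m, f (p j)) - m * ∫ t in (0:ℝ)..1, f t
      = ∑ j ∈ Finset.range m, (f (p j) - m * ∫ t in a j..a (j+1), f t) := by
    rw [Finset.sum_sub_distrib, ← Finset.mul_sum, hsplit]
  rw [hdecomp]
  calc |∑ j ∈ Finset.range m, (f (p j) - m * ∫ t in a j..a (j+1), f t)|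
      ≤ ∑ j ∈ Finset.range m, |f (p j) - m * ∫ t in a j..a (j+1), f t| :=
        Finset.abs_sum_le_sum_abs _ _
    _ ≤ ∑ _j ∈ Finset.range m, ε := Finset.sum_le_sum (fun j hj => key j (Finset.mem_range.mp hj))
    _ = m * ε := by rw [Finset.sum_const, Finset.card_range, nsmul_eq_mul]

end VN

set_option maxHeartbeats 1000000 in
open Filter VN in
/-- **von Neumann's theorem.** If `{x_n}` is a dense sequence of points in `[0,1]` (every
nonempty open subinterval contains some `x_n`), then there is a rearrangement of these points
(a reindexing by a bijection of `ℕ`) which is uniformly distributed. -/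
theorem vonNeumann (x : ℕ → ℝ) (hmem : ∀ n, x n ∈ Set.Icc (0:ℝ) 1)
    (hdense : ∀ a b : ℝ, 0 ≤ a → a < b → b ≤ 1 → ∃ n, x n ∈ Set.Ioo a b) :
    ∃ e : ℕ ≃ ℕ, ∀ f : ℝ → ℝ, ContinuousOn f (Set.Icc 0 1) →
      Tendsto (fun n => (∑ i ∈ Finset.range n, f (x (e i))) / (n : ℝ))
        atTop (nhds (∫ t in (0:ℝ)..1, f t)) := by
  classical
  refine ⟨Equiv.ofBijective (VN.g x hdense) ⟨VN.g_inj x hdense, VN.g_surj x hdense⟩, ?_⟩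
  intro f hf
  change Tendsto (fun n => (∑ i ∈ Finset.range n, f (x (VN.g x hdense i))) / (n : ℝ)) atTop _
  set G := VN.g x hdense with hG
  set L : ℝ := ∫ t in (0:ℝ)..1, f t with hL
  obtain ⟨M, hM⟩ := (isCompact_Icc (a := (0:ℝ)) (b := 1)).exists_bound_of_continuousOn hf
  have hM0 : 0 ≤ M := le_trans (norm_nonneg _) (hM 0 (by norm_num))
  have habsf : ∀ t ∈ Set.Icc (0:ℝ) 1, |f t| ≤ M := fun t ht => by
    have := hM t ht; rwa [Real.norm_eq_abs] at this
  set z : ℕ → ℝ := fun i => if VN.issq i then VN.mid i else x (G i) with hzdef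
  have hzIcc : ∀ i, z i ∈ Set.Icc (VN.lo i) (VN.hi i) := by
    intro i
    simp only [hzdef]
    split
    · exact ⟨(lo_lt_mid i).le, (mid_lt_hi i).le⟩
    · have := VN.g_mem_Ioo x hdense (k := i) (by assumption)
      exact ⟨this.1.le, this.2.le⟩
  have hz01 : ∀ i, z i ∈ Set.Icc (0:ℝ) 1 := fun i =>
    ⟨le_trans (lo_nonneg i) (hzIcc i).1, le_trans (hzIcc i).2 (hi_le_one i)⟩
  set CM : ℝ := M + |L| with hCM
  have hCM0 : 0 ≤ CM := by positivity
  have hfL : ∀ t ∈ Set.Icc (0:ℝ) 1, |f t - L| ≤ CM := by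
    intro t ht
    calc |f t - L| ≤ |f t| + |L| := abs_sub _ _
      _ ≤ M + |L| := by linarith [habsf t ht]
  rw [Metric.tendsto_atTop]
  intro ε hε
  have hε8 : 0 < ε/8 := by linarith
  -- uniform continuity
  have hUC := isCompact_Icc.uniformContinuousOn_of_continuous hf
  rw [Metric.uniformContinuousOn_iff] at hUC
  obtain ⟨δ, hδ0, hδ⟩ := hUC (ε/8) hε8
  have hδf : ∀ s ∈ Set.Icc (0:ℝ) 1, ∀ t ∈ Set.Icc (0:ℝ) 1, |s - t| ≤ δ/2 → |f s - f t| ≤ ε/8 := by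
    intro s hs t ht hst
    have := hδ s hs t ht (by rw [Real.dist_eq]; linarith)
    rw [Real.dist_eq] at this
    linarith
  -- K₀ : beyond this, blocks are fine enough
  obtain ⟨K₀, hK₀⟩ := exists_nat_ge (2/δ)
  have hK₀δ : ∀ k : ℕ, K₀ ≤ k → 1/((k:ℝ)+1) ≤ δ/2 := by
    intro k hk
    have h1 : (2:ℝ)/δ ≤ (k:ℝ)+1 := le_trans hK₀ (by exact_mod_cast by omega)
    rw [div_le_div_iff₀ (by positivity) (by norm_num)]
    have := (div_le_iff₀ hδ0).mp h1
    linarith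
  -- block sums
  set bs : ℕ → ℝ := fun k => ∑ j ∈ Finset.range (k+1), f (z (VN.T k + j)) with hbs
  have hzblock : ∀ k : ℕ, ∀ j, j < k + 1 →
      z (VN.T k + j) ∈ Set.Icc ((j:ℝ)/((k:ℕ)+1:ℕ)) (((j:ℝ)+1)/((k:ℕ)+1:ℕ)) := by
    intro k j hj
    have hbp : VN.bp (VN.T k + j) = (k, j) := VN.bp_eq (by omega)
    have h := hzIcc (VN.T k + j)
    unfold VN.lo VN.hi at h
    rw [hbp] at h
    push_cast at h ⊢
    exact h
  have herr1 : ∀ k : ℕ, |bs k - ((k:ℝ)+1) * L| ≤ ((k:ℝ)+1) * CM := by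
    intro k
    have h1 : bs k - ((k:ℝ)+1) * L = ∑ j ∈ Finset.range (k+1), (f (z (VN.T k + j)) - L) := by
      rw [Finset.sum_sub_distrib, Finset.sum_const, Finset.card_range, nsmul_eq_mul]
      push_cast; ring
    rw [h1]
    calc |∑ j ∈ Finset.range (k+1), (f (z (VN.T k + j)) - L)|
        ≤ ∑ j ∈ Finset.range (k+1), |f (z (VN.T k + j)) - L| := Finset.abs_sum_le_sum_abs _ _
      _ ≤ ∑ _j ∈ Finset.range (k+1), CM :=
          Finset.sum_le_sum (fun j _ => hfL _ (hz01 _))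
      _ = ((k:ℝ)+1) * CM := by
          rw [Finset.sum_const, Finset.card_range, nsmul_eq_mul]; push_cast; ring
  have herr2 : ∀ k : ℕ, K₀ ≤ k → |bs k - ((k:ℝ)+1) * L| ≤ ((k:ℝ)+1) * (ε/8) := by
    intro k hk
    have h := VN.riemann f hf (le_of_lt hε8) hδf (m := k+1) (by omega)
      (by push_cast; exact hK₀δ k hk) (fun j => z (VN.T k + j))
      (fun j hj => hzblock k j hj)
    push_cast at h
    exact h
  -- partial sums
  set S : ℕ → ℝ := fun n => ∑ i ∈ Finset.range n, f (x (G i)) with hS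
  set Z : ℕ → ℝ := fun n => ∑ i ∈ Finset.range n, f (z i) with hZ
  have hSZ : ∀ n : ℕ, |S n - Z n| ≤ 2*M*((Nat.sqrt n : ℝ) + 1) := by
    intro n
    have h1 : S n - Z n = ∑ i ∈ Finset.range n, (f (x (G i)) - f (z i)) :=
      (Finset.sum_sub_distrib _ _).symm
    rw [h1]
    calc |∑ i ∈ Finset.range n, (f (x (G i)) - f (z i))|
        ≤ ∑ i ∈ Finset.range n, |f (x (G i)) - f (z i)| := Finset.abs_sum_le_sum_abs _ _
      _ ≤ ∑ i ∈ Finset.range n, (if VN.issq i then 2*M else 0) := by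
          apply Finset.sum_le_sum
          intro i _
          by_cases hi : VN.issq i
          · rw [if_pos hi]
            calc |f (x (G i)) - f (z i)| ≤ |f (x (G i))| + |f (z i)| := abs_sub _ _
              _ ≤ 2*M := by linarith [habsf _ (hmem (G i)), habsf _ (hz01 i)]
          · rw [if_neg hi]
            have : z i = x (G i) := by simp only [hzdef]; rw [if_neg hi]
            rw [this, sub_self, abs_zero]
      _ = ∑ i ∈ (Finset.range n).filter VN.issq, 2*M := (Finset.sum_filter _ _).symm
      _ = (((Finset.range n).filter VN.issq).card : ℝ) * (2*M) := by
          rw [Finset.sum_const, nsmul_eq_mul]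
      _ ≤ ((Nat.sqrt n : ℝ) + 1) * (2*M) := by
          apply mul_le_mul_of_nonneg_right _ (by positivity)
          exact_mod_cast VN.card_sq n
      _ = 2*M*((Nat.sqrt n : ℝ) + 1) := by ring
  have hTcast : ∀ m : ℕ, (VN.T m : ℝ) = ∑ k ∈ Finset.range m, ((k:ℝ)+1) := by
    intro m
    rw [VN.T, Nat.cast_sum]
    push_cast
    rfl
  have hZT : ∀ m : ℕ, |Z (VN.T m) - (VN.T m : ℝ) * L|
      ≤ CM * (VN.T K₀ : ℝ) + (ε/8) * (VN.T m : ℝ) := by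
    intro m
    have h1 : Z (VN.T m) = ∑ k ∈ Finset.range m, bs k := by
      simp only [hZ, hbs]
      exact VN.sum_range_T _ m
    have h2 := hTcast m
    have h3 : Z (VN.T m) - (VN.T m : ℝ) * L
        = ∑ k ∈ Finset.range m, (bs k - ((k:ℝ)+1) * L) := by
      rw [h1, h2, Finset.sum_sub_distrib, Finset.sum_mul]
    rw [h3]
    calc |∑ k ∈ Finset.range m, (bs k - ((k:ℝ)+1) * L)|
        ≤ ∑ k ∈ Finset.range m, |bs k - ((k:ℝ)+1) * L| := Finset.abs_sum_le_sum_abs _ _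
      _ ≤ ∑ k ∈ Finset.range m,
            ((if k < K₀ then ((k:ℝ)+1)*CM else 0) + ((k:ℝ)+1)*(ε/8)) := by
          apply Finset.sum_le_sum
          intro k _
          by_cases hk : k < K₀
          · rw [if_pos hk]
            have := herr1 k
            nlinarith [(Nat.cast_nonneg k : (0:ℝ) ≤ k)]
          · rw [if_neg hk]
            have := herr2 k (by omega)
            linarith
      _ = (∑ k ∈ Finset.range m, if k < K₀ then ((k:ℝ)+1)*CM else 0)
            + ∑ k ∈ Finset.range m, ((k:ℝ)+1)*(ε/8) := Finset.sum_add_distrib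
      _ ≤ CM * (VN.T K₀ : ℝ) + (ε/8) * (VN.T m : ℝ) := by
          apply add_le_add
          · rw [← Finset.sum_filter]
            calc ∑ k ∈ (Finset.range m).filter (· < K₀), (((k:ℝ)+1)*CM)
                ≤ ∑ k ∈ Finset.range K₀, (((k:ℝ)+1)*CM) := by
                  apply Finset.sum_le_sum_of_subset_of_nonneg
                  · intro k hk
                    simp only [Finset.mem_filter, Finset.mem_range] at hk ⊢
                    exact hk.2
                  · intro k _ _
                    positivity
              _ = CM * (VN.T K₀ : ℝ) := by
                  rw [← Finset.sum_mul, mul_comm, hTcast K₀]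
          · apply le_of_eq
            rw [← Finset.sum_mul, mul_comm, hTcast m]
  -- master estimate
  have hkey : ∀ n : ℕ, |S n - (n:ℝ)*L| ≤ 2*M*((Nat.sqrt n : ℝ)+1) + CM * (VN.T K₀ : ℝ)
      + (ε/8)*(n:ℝ) + (((VN.bp n).1 : ℝ)+1)*CM := by
    intro n
    set m := (VN.bp n).1 with hm
    set j := (VN.bp n).2 with hj
    have hn : n = VN.T m + j := VN.bp_spec n
    have hjm : j ≤ m := VN.bp_le n
    have hTn : VN.T m ≤ n := by omega
    -- partial block
    have hpart : |(∑ j' ∈ Finset.range j, f (z (VN.T m + j'))) - (j:ℝ)*L|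
        ≤ ((m:ℝ)+1)*CM := by
      have h1 : (∑ j' ∈ Finset.range j, f (z (VN.T m + j'))) - (j:ℝ)*L
          = ∑ j' ∈ Finset.range j, (f (z (VN.T m + j')) - L) := by
        rw [Finset.sum_sub_distrib, Finset.sum_const, Finset.card_range, nsmul_eq_mul]
      rw [h1]
      calc |∑ j' ∈ Finset.range j, (f (z (VN.T m + j')) - L)|
          ≤ ∑ j' ∈ Finset.range j, |f (z (VN.T m + j')) - L| := Finset.abs_sum_le_sum_abs _ _
        _ ≤ ∑ _j' ∈ Finset.range j, CM := Finset.sum_le_sum (fun _ _ => hfL _ (hz01 _))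
        _ = (j:ℝ) * CM := by rw [Finset.sum_const, Finset.card_range, nsmul_eq_mul]
        _ ≤ ((m:ℝ)+1)*CM := by
            apply mul_le_mul_of_nonneg_right _ hCM0
            have : (j:ℝ) ≤ (m:ℝ) := by exact_mod_cast hjm
            linarith
    have hZn : Z n = Z (VN.T m) + ∑ j' ∈ Finset.range j, f (z (VN.T m + j')) := by
      simp only [hZ]
      conv_lhs => rw [hn]
      exact VN.sum_range_add' _ _ _
    have hnL : (n:ℝ) * L = (VN.T m : ℝ) * L + (j:ℝ) * L := by
      have : (n:ℝ) = (VN.T m : ℝ) + (j:ℝ) := by exact_mod_cast hn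
      rw [this]; ring
    have hdec : S n - (n:ℝ)*L = (S n - Z n) + (Z (VN.T m) - (VN.T m : ℝ)*L)
        + ((∑ j' ∈ Finset.range j, f (z (VN.T m + j'))) - (j:ℝ)*L) := by
      rw [hZn, hnL]; ring
    have hTmn : (ε/8) * (VN.T m : ℝ) ≤ (ε/8) * (n:ℝ) := by
      apply mul_le_mul_of_nonneg_left _ (by linarith)
      exact_mod_cast hTn
    calc |S n - (n:ℝ)*L| ≤ |S n - Z n| + |Z (VN.T m) - (VN.T m : ℝ)*L|
          + |(∑ j' ∈ Finset.range j, f (z (VN.T m + j'))) - (j:ℝ)*L| := by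
          rw [hdec]; exact (abs_add_le _ _).trans (by linarith [abs_add_le (S n - Z n) (Z (VN.T m) - (VN.T m : ℝ)*L)])
      _ ≤ 2*M*((Nat.sqrt n : ℝ)+1) + (CM * (VN.T K₀ : ℝ) + (ε/8)*(VN.T m : ℝ))
          + ((m:ℝ)+1)*CM := by
          have := hSZ n
          have := hZT m
          gcongr <;> linarith
      _ ≤ _ := by linarith
  -- eventual bound (a) : the square-step term
  obtain ⟨Ka, hKa⟩ := exists_nat_ge (32*(M+1)/ε)
  have hA : ∀ n : ℕ, (Ka+1)*(Ka+1) ≤ n → 2*M*((Nat.sqrt n : ℝ)+1) ≤ (ε/8)*(n:ℝ) := by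
    intro n hn
    set s := Nat.sqrt n with hs
    have hs1 : Ka + 1 ≤ s := by
      have := Nat.sqrt_le_sqrt hn
      rwa [Nat.sqrt_eq (Ka+1)] at this
    have hs2 : s * s ≤ n := Nat.sqrt_le n
    have hs1' : (Ka:ℝ) + 1 ≤ (s:ℝ) := by exact_mod_cast hs1
    have hs2' : (s:ℝ) * (s:ℝ) ≤ (n:ℝ) := by exact_mod_cast hs2
    have hKa' : 32*(M+1) ≤ ε * ((Ka:ℝ)+1) := by
      have := (div_le_iff₀ hε).mp hKa
      nlinarith
    have hs0 : (1:ℝ) ≤ (s:ℝ) := by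
      have : (0:ℝ) ≤ (Ka:ℝ) := Nat.cast_nonneg _
      linarith
    have e1 : 32*(M+1)*(s:ℝ) ≤ ε * ((Ka:ℝ)+1) * (s:ℝ) :=
      mul_le_mul_of_nonneg_right hKa' (by linarith)
    have e2 : ε * ((Ka:ℝ)+1) * (s:ℝ) ≤ ε * ((s:ℝ) * (s:ℝ)) := by
      have h := mul_le_mul_of_nonneg_right (mul_le_mul_of_nonneg_left hs1' hε.le)
        (by linarith : (0:ℝ) ≤ (s:ℝ))
      nlinarith [h]
    have e3 : ε * ((s:ℝ)*(s:ℝ)) ≤ ε * (n:ℝ) := mul_le_mul_of_nonneg_left hs2' hε.le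
    nlinarith [e1, e2, e3, mul_nonneg hM0 (by linarith : (0:ℝ) ≤ (s:ℝ) - 1)]
  -- eventual bound (b) : the constant term
  obtain ⟨Nb, hNb⟩ := exists_nat_ge (8 * (CM * (VN.T K₀ : ℝ)) / ε)
  have hB : ∀ n : ℕ, Nb ≤ n → CM * (VN.T K₀ : ℝ) ≤ (ε/8)*(n:ℝ) := by
    intro n hn
    have h1 : (Nb:ℝ) ≤ (n:ℝ) := by exact_mod_cast hn
    have h2 := (div_le_iff₀ hε).mp hNb
    have e := mul_le_mul_of_nonneg_left h1 hε.le
    nlinarith [h2, e, hε.le]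
  -- eventual bound (c) : the partial-block term
  obtain ⟨Kc', hKc'⟩ := exists_nat_ge (16*CM/ε)
  set Kc := Kc' + 1 with hKc
  have hC : ∀ n : ℕ, VN.T Kc ≤ n → (((VN.bp n).1 : ℝ)+1)*CM ≤ (ε/8)*(n:ℝ) := by
    intro n hn
    set m := (VN.bp n).1 with hm
    have hmKc : Kc ≤ m := VN.bp_fst_ge hn
    have hTn : VN.T m ≤ n := by
      have h := VN.bp_spec n
      rw [← hm] at h
      omega
    have h2T : 2 * VN.T m = m * (m+1) := VN.two_T m
    have hmn : (m:ℝ) * ((m:ℝ)+1) ≤ 2*(n:ℝ) := by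
      have : m * (m+1) ≤ 2 * n := by omega
      exact_mod_cast this
    have hm1 : (1:ℝ) ≤ (m:ℝ) := by
      have : 1 ≤ m := by omega
      exact_mod_cast this
    have hKc2 : 16*CM ≤ ε * (m:ℝ) := by
      have h3 : (Kc':ℝ) ≤ (m:ℝ) := by exact_mod_cast (by omega : Kc' ≤ m)
      have := (div_le_iff₀ hε).mp hKc'
      nlinarith
    have e1 : 16*CM*((m:ℝ)+1) ≤ ε*(m:ℝ)*((m:ℝ)+1) :=
      mul_le_mul_of_nonneg_right hKc2 (by positivity)
    have e2 : ε*((m:ℝ)*((m:ℝ)+1)) ≤ ε*(2*(n:ℝ)) := mul_le_mul_of_nonneg_left hmn hε.le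
    nlinarith [e1, e2]
  -- conclude
  refine ⟨max (max ((Ka+1)*(Ka+1)) Nb) (max (VN.T Kc) 1), fun n hn => ?_⟩
  have hn1 : 1 ≤ n := le_trans (le_max_right _ _ |>.trans (le_max_right _ _)) hn
  have hnA := hA n (le_trans ((le_max_left _ _).trans (le_max_left _ _)) hn)
  have hnB := hB n (le_trans ((le_max_right _ _).trans (le_max_left _ _)) hn)
  have hnC := hC n (le_trans ((le_max_left _ _).trans (le_max_right _ _)) hn)
  have hn0 : (0:ℝ) < (n:ℝ) := by exact_mod_cast hn1
  have htotal : |S n - (n:ℝ)*L| ≤ (ε/2) * (n:ℝ) := by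
    have := hkey n
    linarith
  rw [Real.dist_eq]
  have heq : S n / (n:ℝ) - L = (S n - (n:ℝ)*L) / (n:ℝ) := by
    field_simp
  rw [heq, abs_div, abs_of_pos hn0]
  rw [div_lt_iff₀ hn0]
  calc |S n - (n:ℝ)*L| ≤ (ε/2) * (n:ℝ) := htotal
    _ < ε * (n:ℝ) := by nlinarith
end

section
/- Let s ≥ 1 and let real numbers α^1, …, α^s satisfy α^1 = 1/2 and (1/2^t − 1/4^s)/(1/2^{t−1}) ≤ α^t ≤ (1/2^t)/(1/2^{t−1} − 2/4^s) for 2 ≤ t ≤ s. Then for every 1 ≤ t ≤ s the product L(t) = Π_{j=1}^{t} α^j satisfies (1/2^t)(1 − 2^t/4^s)^{t−1} ≤ L(t) ≤ (1/2^t)(1 − 2^t/4^s)^{−(t−1)}. -/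
lemma pow_ratio_lt_one (s t : ℕ) (hs : 1 ≤ s) (ht : t ≤ s) : (2:ℝ)^t / 4^s < 1 := by
  rw [div_lt_one (by positivity)]
  calc (2:ℝ)^t ≤ 2^s := by
        apply pow_le_pow_right₀ (by norm_num) ht
    _ < 4^s := pow_lt_pow_left₀ (by norm_num) (by norm_num) (by omega)

/-- Estimate (bounds on `L_s(t)`): if `α¹ = 1/2` and
`(1/2^t - 1/4^s)/(1/2^(t-1)) ≤ αᵗ ≤ (1/2^t)/(1/2^(t-1) - 2/4^s)` for `2 ≤ t ≤ s`, then
for every `1 ≤ t ≤ s` the product `L(t) = ∏_{j=1}^t αʲ` satisfies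
`(1/2^t)(1 - 2^t/4^s)^(t-1) ≤ L(t) ≤ (1/2^t)(1 - 2^t/4^s)^(-(t-1))`. -/
theorem product_bounds (s : ℕ) (hs : 1 ≤ s) (α : ℕ → ℝ) (hα1 : α 1 = 1 / 2)
    (hα : ∀ t : ℕ, 2 ≤ t → t ≤ s →
      ((1 : ℝ) / 2 ^ t - 1 / 4 ^ s) / (1 / 2 ^ (t - 1)) ≤ α t ∧
        α t ≤ (1 / 2 ^ t) / ((1 : ℝ) / 2 ^ (t - 1) - 2 / 4 ^ s)) :
    ∀ t : ℕ, 1 ≤ t → t ≤ s →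
      (1 / 2 ^ t) * ((1 : ℝ) - 2 ^ t / 4 ^ s) ^ (t - 1) ≤ (∏ j ∈ Finset.Icc 1 t, α j) ∧
        (∏ j ∈ Finset.Icc 1 t, α j) ≤
          (1 / 2 ^ t) * ((1 : ℝ) - 2 ^ t / 4 ^ s) ^ (-((t : ℤ) - 1)) := by
  intro t ht1
  induction t, ht1 using Nat.le_induction with
  | base =>
    intro _
    simp [hα1]
  | succ t ht ih =>
    intro hts
    have hts' : t ≤ s := by omega
    obtain ⟨ihl, ihr⟩ := ih hts'
    have h4 : (0:ℝ) < 4^s := by positivity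
    have h2t : (0:ℝ) < 2^t := by positivity
    have hct : 0 < 1 - (2:ℝ)^t/4^s := by
      have := pow_ratio_lt_one s t hs hts'; linarith
    have hct1 : 0 < 1 - (2:ℝ)^(t+1)/4^s := by
      have := pow_ratio_lt_one s (t+1) hs hts; linarith
    have hmono : 1 - (2:ℝ)^(t+1)/4^s ≤ 1 - 2^t/4^s := by
      gcongr
      · norm_num
      · omega
    obtain ⟨hl, hr⟩ := hα (t+1) (by omega) hts
    have hsimp : t + 1 - 1 = t := rfl
    have hαl : (1/2) * (1 - (2:ℝ)^(t+1)/4^s) ≤ α (t+1) := by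
      have heq : ((1:ℝ) / 2 ^ (t+1) - 1 / 4 ^ s) / (1 / 2 ^ (t + 1 - 1))
          = (1/2) * (1 - (2:ℝ)^(t+1)/4^s) := by
        rw [hsimp]
        field_simp
        ring
      linarith [heq ▸ hl]
    have hd : (0:ℝ) < 1 / 2 ^ (t + 1 - 1) - 2 / 4 ^ s := by
      rw [hsimp]
      have : (1:ℝ)/2^t - 2/4^s = (1 - 2^(t+1)/4^s)/2^t := by
        field_simp; ring
      rw [this]; positivity
    have hαr : α (t+1) ≤ (1/2) * (1 - (2:ℝ)^(t+1)/4^s)⁻¹ := by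
      have hden : (1:ℝ)/2^t - 2/4^s = (1 - 2^(t+1)/4^s)/2^t := by
        field_simp; ring
      have heq : ((1:ℝ) / 2 ^ (t+1)) / ((1:ℝ) / 2 ^ (t + 1 - 1) - 2 / 4 ^ s)
          = (1/2) * (1 - (2:ℝ)^(t+1)/4^s)⁻¹ := by
        have hlt : (2:ℝ)^t * 2 < 4^s := by
          rw [pow_succ] at hct1
          exact (div_lt_one h4).mp (by linarith)
        rw [hsimp, hden, div_div_eq_mul_div, div_eq_mul_inv, pow_succ]
        field_simp
      linarith [heq ▸ hr]
    have hα0 : 0 < α (t+1) := lt_of_lt_of_le (by positivity) hαl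
    have hP0 : 0 < ∏ j ∈ Finset.Icc 1 t, α j := lt_of_lt_of_le (by positivity) ihl
    rw [Finset.prod_Icc_succ_top (by omega : 1 ≤ t + 1)]
    have key : (1 - (2:ℝ)^(t+1)/4^s)^t ≤ (1 - 2^t/4^s)^(t-1) * (1 - 2^(t+1)/4^s) := by
      have ht' : t - 1 + 1 = t := by omega
      calc (1 - (2:ℝ)^(t+1)/4^s)^t = (1 - 2^(t+1)/4^s)^(t-1) * (1 - 2^(t+1)/4^s) := by
            rw [← pow_succ, ht']
        _ ≤ (1 - 2^t/4^s)^(t-1) * (1 - 2^(t+1)/4^s) := by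
            apply mul_le_mul_of_nonneg_right _ hct1.le
            exact pow_le_pow_left₀ hct1.le hmono _
    constructor
    · calc (1:ℝ) / 2 ^ (t+1) * (1 - 2 ^ (t+1) / 4 ^ s) ^ (t + 1 - 1)
          ≤ (1 / 2 ^ t * (1 - 2 ^ t / 4 ^ s) ^ (t - 1)) * ((1/2) * (1 - 2^(t+1)/4^s)) := by
            rw [hsimp]
            have := mul_le_mul_of_nonneg_left key (by positivity : (0:ℝ) ≤ 1/2^(t+1))
            calc (1:ℝ) / 2 ^ (t+1) * (1 - 2 ^ (t+1) / 4 ^ s) ^ t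
                ≤ 1/2^(t+1) * ((1 - 2^t/4^s)^(t-1) * (1 - 2^(t+1)/4^s)) := this
              _ = (1 / 2 ^ t * (1 - 2 ^ t / 4 ^ s) ^ (t - 1)) * ((1/2) * (1 - 2^(t+1)/4^s)) := by
                  rw [pow_succ]; ring
        _ ≤ (∏ j ∈ Finset.Icc 1 t, α j) * α (t+1) :=
            mul_le_mul ihl hαl (by positivity) hP0.le
    · have hz1 : ((1:ℝ) - 2^t/4^s) ^ (-((t:ℤ)-1)) = ((1 - 2^t/4^s)^(t-1 : ℕ))⁻¹ := by
        have : -((t:ℤ)-1) = -((t-1 : ℕ) : ℤ) := by push_cast [Nat.cast_sub ht]; ring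
        rw [this, zpow_neg, zpow_natCast]
      have hz2 : ((1:ℝ) - 2^(t+1)/4^s) ^ (-(((t:ℤ)+1)-1)) = ((1 - 2^(t+1)/4^s)^(t : ℕ))⁻¹ := by
        have : -(((t:ℤ)+1)-1) = -((t : ℕ) : ℤ) := by push_cast; ring
        rw [this, zpow_neg, zpow_natCast]
      calc (∏ j ∈ Finset.Icc 1 t, α j) * α (t+1)
          ≤ (1 / 2 ^ t * (1 - 2 ^ t / 4 ^ s) ^ (-((t:ℤ)-1))) * ((1/2) * (1 - (2:ℝ)^(t+1)/4^s)⁻¹) := by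
            apply mul_le_mul ihr hαr hα0.le
            rw [hz1]; positivity
        _ ≤ 1 / 2 ^ (t+1) * ((1:ℝ) - 2 ^ (t+1) / 4 ^ s) ^ (-(((t+1):ℤ)-1)) := by
            push_cast
            rw [hz1, hz2]
            rw [show (1:ℝ) / 2 ^ t * ((1 - 2 ^ t / 4 ^ s)^(t-1:ℕ))⁻¹ * (1 / 2 * (1 - 2 ^ (t+1) / 4 ^ s)⁻¹)
              = 1/2^(t+1) * (((1 - 2^t/4^s)^(t-1:ℕ)) * (1 - 2^(t+1)/4^s))⁻¹ by
                rw [mul_inv, pow_succ]; ring]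
            apply mul_le_mul_of_nonneg_left _ (by positivity)
            apply inv_anti₀ (by positivity) key
end
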